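/- arXiv:2004.00026 — 3 statements merged into one kernel-verified Lean document; each statement's English description precedes it below -/
import Mathlib

section
/- Fix a point y ∈ Y with F(y) ≠ 0. Drawing k i.i.d. samples x_1,…,x_k with probabilities s(x)/s_tot where s(x) ≥ σ(x) for all x, and setting F̂(y) = (1/k)Σ_i (s_tot/s(x_i)) f(x_i, y), Hoeffding's inequality gives Pr[|F̂(y) − F(y)| > ε|F(y)|] ≤ 2 exp(−k ε² / (2 s_tot²)). -/
open Real Finset

lemma hoeffding_aux (p : ℝ) (hp0 : 0 ≤ p) (hp1 : p ≤ 1) (x : ℝ) :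
    p * exp x + (1 - p) * exp (-x) ≤ exp ((2 * p - 1) * x + x ^ 2 / 2) := by
  set D : ℝ → ℝ := fun x => p * exp x + (1 - p) * exp (-x) with hDdef
  have hDpos : ∀ x, 0 < D x := by
    intro x
    have h1 := exp_pos x
    have h2 := exp_pos (-x)
    have hm : 0 < min (exp x) (exp (-x)) := lt_min h1 h2
    have e1 : p * min (exp x) (exp (-x)) ≤ p * exp x :=
      mul_le_mul_of_nonneg_left (min_le_left _ _) hp0
    have e2 : (1 - p) * min (exp x) (exp (-x)) ≤ (1 - p) * exp (-x) :=
      mul_le_mul_of_nonneg_left (min_le_right _ _) (by linarith)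
    simp only [hDdef]
    nlinarith
  set D' : ℝ → ℝ := fun x => p * exp x - (1 - p) * exp (-x) with hD'def
  have hexp : ∀ x : ℝ, HasDerivAt (fun x : ℝ => exp (-x)) (-exp (-x)) x := by
    intro x
    have h2 : HasDerivAt (fun x : ℝ => exp (-x)) (exp (-x) * -1) x :=
      (Real.hasDerivAt_exp (-x)).comp x (hasDerivAt_neg x)
    simpa using h2
  have hD : ∀ x, HasDerivAt D (D' x) x := by
    intro x
    have h1 : HasDerivAt (fun x : ℝ => p * exp x) (p * exp x) x :=
      (Real.hasDerivAt_exp x).const_mul p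
    have h3 := h1.add (((hexp x)).const_mul (1 - p))
    simp only [hDdef, hD'def]
    exact h3.congr_deriv (by ring)
  have hD' : ∀ x, HasDerivAt D' (D x) x := by
    intro x
    have h1 : HasDerivAt (fun x : ℝ => p * exp x) (p * exp x) x :=
      (Real.hasDerivAt_exp x).const_mul p
    have h3 := h1.sub (((hexp x)).const_mul (1 - p))
    simp only [hDdef, hD'def]
    exact h3.congr_deriv (by ring)
  -- φ := derivative of the gap function g
  set φ : ℝ → ℝ := fun x => (2 * p - 1) + x - D' x / D x with hφdef
  have hφd : ∀ x, HasDerivAt φ ((D' x / D x) ^ 2) x := by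
    intro x
    have hq : HasDerivAt (fun x => D' x / D x) ((D x * D x - D' x * D' x) / D x ^ 2) x :=
      (hD' x).div (hD x) (hDpos x).ne'
    have h1 : HasDerivAt (fun x : ℝ => (2 * p - 1) + x) 1 x :=
      (hasDerivAt_id x).const_add (2 * p - 1)
    have h2 := h1.sub hq
    refine h2.congr_deriv ?_
    have h0 := (hDpos x).ne'
    field_simp
    ring
  have hφ0 : φ 0 = 0 := by
    simp only [hφdef, hDdef, hD'def]
    norm_num
    ring
  have hφdiff : Differentiable ℝ φ := fun x => (hφd x).differentiableAt
  have hφmono : Monotone φ := by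
    apply monotone_of_deriv_nonneg hφdiff
    intro x
    rw [(hφd x).deriv]
    positivity
  -- g := gap function
  set g : ℝ → ℝ := fun x => (2 * p - 1) * x + x ^ 2 / 2 - Real.log (D x) with hgdef
  have hgd : ∀ x, HasDerivAt g (φ x) x := by
    intro x
    have h1 : HasDerivAt (fun x : ℝ => (2 * p - 1) * x) (2 * p - 1) x := by
      simpa using (hasDerivAt_id x).const_mul (2 * p - 1)
    have h2 : HasDerivAt (fun x : ℝ => x ^ 2 / 2) x x := by
      have := (hasDerivAt_pow 2 x).div_const 2
      simpa using this
    have h3 : HasDerivAt (fun x => Real.log (D x)) (D' x / D x) x :=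
      (hD x).log (hDpos x).ne'
    have h4 := (h1.add h2).sub h3
    exact h4
  have hg0 : g 0 = 0 := by
    simp only [hgdef, hDdef]
    norm_num
  have hgnonneg : ∀ x, 0 ≤ g x := by
    intro x
    rcases le_total 0 x with hx | hx
    · have hmono : MonotoneOn g (Set.Ici (0 : ℝ)) := by
        apply monotoneOn_of_deriv_nonneg (convex_Ici 0)
        · exact fun z _ => ((hgd z).differentiableAt).continuousAt.continuousWithinAt
        · exact fun z _ => ((hgd z).differentiableAt).differentiableWithinAt
        · intro z hz
          rw [(hgd z).deriv]
          rw [interior_Ici] at hz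
          calc (0 : ℝ) = φ 0 := hφ0.symm
            _ ≤ φ z := hφmono (le_of_lt hz)
      have := hmono (Set.self_mem_Ici) (Set.mem_Ici.2 hx) hx
      linarith [hg0 ▸ this]
    · have hmono : AntitoneOn g (Set.Iic (0 : ℝ)) := by
        apply antitoneOn_of_deriv_nonpos (convex_Iic 0)
        · exact fun z _ => ((hgd z).differentiableAt).continuousAt.continuousWithinAt
        · exact fun z _ => ((hgd z).differentiableAt).differentiableWithinAt
        · intro z hz
          rw [(hgd z).deriv]
          rw [interior_Iic] at hz
          calc φ z ≤ φ 0 := hφmono (le_of_lt hz)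
            _ = 0 := hφ0
      have := hmono (Set.mem_Iic.2 hx) (Set.self_mem_Iic) hx
      linarith [hg0 ▸ this]
  have hx := hgnonneg x
  have hlog : Real.log (D x) ≤ (2 * p - 1) * x + x ^ 2 / 2 := by
    simp only [hgdef] at hx; linarith
  calc D x = exp (Real.log (D x)) := (exp_log (hDpos x)).symm
    _ ≤ exp ((2 * p - 1) * x + x ^ 2 / 2) := exp_le_exp.2 hlog

lemma mgf_bound {X : Type*} [Fintype X] (w g : X → ℝ) (hw : ∀ x, 0 ≤ w x)
    (hw1 : ∑ x, w x = 1) (M t : ℝ) (hM : 0 < M) (hg : ∀ x, |g x| ≤ M) :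
    ∑ x, w x * exp (t * g x) ≤ exp (t * (∑ x, w x * g x) + t ^ 2 * M ^ 2 / 2) := by
  set μ := ∑ x, w x * g x with hμdef
  -- pointwise chord bound
  have chord : ∀ x, exp (t * g x) ≤
      ((M + g x) / (2 * M)) * exp (t * M) + ((M - g x) / (2 * M)) * exp (-(t * M)) := by
    intro x
    have h1 : |g x| ≤ M := hg x
    have hga : -M ≤ g x := (abs_le.1 h1).1
    have hgb : g x ≤ M := (abs_le.1 h1).2
    have hl0 : 0 ≤ (M + g x) / (2 * M) := by
      apply div_nonneg (by linarith) (by linarith)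
    have hl1 : 0 ≤ (M - g x) / (2 * M) := by
      apply div_nonneg (by linarith) (by linarith)
    have hsum : (M + g x) / (2 * M) + (M - g x) / (2 * M) = 1 := by
      field_simp
      ring
    have h := convexOn_exp.2 (Set.mem_univ (t * M)) (Set.mem_univ (-(t * M))) hl0 hl1 hsum
    simp only [smul_eq_mul] at h
    have harg : (M + g x) / (2 * M) * (t * M) + (M - g x) / (2 * M) * (-(t * M)) = t * g x := by
      field_simp
      ring
    rwa [harg] at h
  have key : ∀ A B : ℝ,
      ∑ x, w x * (((M + g x) / (2 * M)) * A + ((M - g x) / (2 * M)) * B)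
        = ((M + μ) / (2 * M)) * A + ((M - μ) / (2 * M)) * B := by
    intro A B
    calc ∑ x, w x * (((M + g x) / (2 * M)) * A + ((M - g x) / (2 * M)) * B)
        = ∑ x, (w x * ((A + B) / 2) + (w x * g x) * ((A - B) / (2 * M))) := by
          apply Finset.sum_congr rfl
          intro x _
          field_simp
          ring
      _ = (∑ x, w x) * ((A + B) / 2) + (∑ x, w x * g x) * ((A - B) / (2 * M)) := by
          rw [Finset.sum_add_distrib, ← Finset.sum_mul, ← Finset.sum_mul]
      _ = ((M + μ) / (2 * M)) * A + ((M - μ) / (2 * M)) * B := by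
          rw [hw1, ← hμdef]
          field_simp
          ring
  have hμabs : |μ| ≤ M := by
    calc |μ| ≤ ∑ x, |w x * g x| := Finset.abs_sum_le_sum_abs _ _
      _ ≤ ∑ x, w x * M := by
          apply Finset.sum_le_sum
          intro x _
          rw [abs_mul, abs_of_nonneg (hw x)]
          exact mul_le_mul_of_nonneg_left (hg x) (hw x)
      _ = M := by rw [← Finset.sum_mul, hw1, one_mul]
  have hp0 : 0 ≤ (M + μ) / (2 * M) :=
    div_nonneg (by linarith [(abs_le.1 hμabs).1]) (by linarith)
  have hp1 : (M + μ) / (2 * M) ≤ 1 := by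
    rw [div_le_one (by linarith)]
    linarith [(abs_le.1 hμabs).2]
  have step1 : ∑ x, w x * exp (t * g x) ≤
      ((M + μ) / (2 * M)) * exp (t * M) + ((M - μ) / (2 * M)) * exp (-(t * M)) := by
    rw [← key (exp (t * M)) (exp (-(t * M)))]
    apply Finset.sum_le_sum
    intro x _
    exact mul_le_mul_of_nonneg_left (chord x) (hw x)
  have step2 := hoeffding_aux ((M + μ) / (2 * M)) hp0 hp1 (t * M)
  have h1mp : 1 - (M + μ) / (2 * M) = (M - μ) / (2 * M) := by
    field_simp
    ring
  rw [h1mp] at step2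
  have harg : (2 * ((M + μ) / (2 * M)) - 1) * (t * M) + (t * M) ^ 2 / 2
      = t * μ + t ^ 2 * M ^ 2 / 2 := by
    field_simp
    ring
  rw [harg] at step2
  exact le_trans step1 step2

lemma prod_factor {X : Type*} [Fintype X] (k : ℕ) (h : X → ℝ) :
    ∑ xs : Fin k → X, ∏ i, h (xs i) = (∑ x, h x) ^ k := by
  classical
  rw [← Fintype.piFinset_univ]
  rw [← Finset.prod_univ_sum]
  simp

/-- Hoeffding bound for the importance-sampling estimator of F(y) from k i.i.d.
samples drawn with probabilities s(x)/s_tot, where s dominates the sensitivities: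
the probability of relative error larger than ε is at most 2·exp(−kε²/(2 s_tot²)). -/
theorem importance_sampling_hoeffding
    {X Y : Type*} [Fintype X] [Fintype Y] [Nonempty X] [Nonempty Y]
    (f : X → Y → ℝ) (F : Y → ℝ) (hF : ∀ y, F y = ∑ x, f x y)
    (hFne : ∀ y, F y ≠ 0)
    (σ : X → ℝ)
    (hσ : ∀ x, σ x = Finset.univ.sup' Finset.univ_nonempty
        (fun y => |f x y| / |F y|))
    (s : X → ℝ) (hσpos : ∀ x, 0 < σ x) (hs : ∀ x, σ x ≤ s x)
    (stot : ℝ) (hstot : stot = ∑ x, s x)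
    (k : ℕ) (hk : 0 < k) (ε : ℝ) (hε : 0 < ε) (y : Y) :
    ∑ xs : Fin k → X,
      (∏ i, s (xs i) / stot) *
        (if ε * |F y| <
            |(1 / (k : ℝ)) * ∑ i, (stot / s (xs i)) * f (xs i) y - F y|
          then (1 : ℝ) else 0)
      ≤ 2 * Real.exp (-(k * ε ^ 2) / (2 * stot ^ 2)) := by
  have hq : F y ≠ 0 := hFne y
  have hqpos : 0 < |F y| := abs_pos.2 hq
  have hspos : ∀ x, 0 < s x := fun x => lt_of_lt_of_le (hσpos x) (hs x)
  have hstotpos : 0 < stot := by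
    rw [hstot]
    exact Finset.sum_pos (fun x _ => hspos x) Finset.univ_nonempty
  set M : ℝ := stot * |F y| with hMdef
  have hMpos : 0 < M := mul_pos hstotpos hqpos
  set w : X → ℝ := fun x => s x / stot with hwdef
  set g : X → ℝ := fun x => stot / s x * f x y with hgdef
  have hw : ∀ x, 0 ≤ w x := fun x => le_of_lt (div_pos (hspos x) hstotpos)
  have hw1 : ∑ x, w x = 1 := by
    simp only [hwdef]
    rw [← Finset.sum_div, ← hstot, div_self hstotpos.ne']
  have hfb : ∀ x, |f x y| ≤ s x * |F y| := by
    intro x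
    have h1 : |f x y| / |F y| ≤ σ x := by
      rw [hσ x]
      exact Finset.le_sup' (fun y' => |f x y'| / |F y'|) (Finset.mem_univ y)
    have h2 : |f x y| / |F y| ≤ s x := le_trans h1 (hs x)
    calc |f x y| = (|f x y| / |F y|) * |F y| := by field_simp
      _ ≤ s x * |F y| := mul_le_mul_of_nonneg_right h2 (le_of_lt hqpos)
  have hgabs : ∀ x, |g x| ≤ M := by
    intro x
    have h1 : |g x| = stot / s x * |f x y| := by
      rw [hgdef]
      rw [abs_mul, abs_of_pos (div_pos hstotpos (hspos x))]
    rw [h1, hMdef]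
    calc stot / s x * |f x y| ≤ stot / s x * (s x * |F y|) :=
          mul_le_mul_of_nonneg_left (hfb x) (le_of_lt (div_pos hstotpos (hspos x)))
      _ = stot * |F y| := by
          have hsx : s x ≠ 0 := (hspos x).ne'
          field_simp
  have hmean : ∑ x, w x * g x = F y := by
    rw [hF y]
    apply Finset.sum_congr rfl
    intro x _
    have hsx : s x ≠ 0 := (hspos x).ne'
    have hst : stot ≠ 0 := hstotpos.ne'
    simp only [hwdef, hgdef]
    field_simp
  set t : ℝ := ε / (stot ^ 2 * |F y|) with htdef
  have htpos : 0 < t := div_pos hε (by positivity)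
  set a : ℝ := ε * |F y| with hadef
  have hapos : 0 < a := mul_pos hε hqpos
  have hkpos : (0 : ℝ) < (k : ℝ) := Nat.cast_pos.2 hk
  -- per-sample mgf bounds
  have mgfp := mgf_bound w g hw hw1 M t hMpos hgabs
  have mgfm := mgf_bound w g hw hw1 M (-t) hMpos hgabs
  rw [hmean] at mgfp mgfm
  set c : ℝ := t ^ 2 * M ^ 2 / 2 with hcdef
  have hcm : (-t) ^ 2 * M ^ 2 / 2 = c := by rw [hcdef]; ring
  rw [hcm] at mgfm
  -- abbreviation for the estimator
  set W : (Fin k → X) → ℝ := fun xs => (1 / (k : ℝ)) * ∑ i, (stot / s (xs i)) * f (xs i) y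
    with hWdef
  -- indicator bound
  have indbd : ∀ xs : Fin k → X,
      (if a < |W xs - F y| then (1 : ℝ) else 0) ≤
        exp (-(t * k * a)) * (exp (t * k * (W xs - F y)) + exp (-(t * k * (W xs - F y)))) := by
    intro xs
    by_cases h : a < |W xs - F y|
    · rw [if_pos h]
      have habs : exp (t * k * a) ≤
          exp (t * k * (W xs - F y)) + exp (-(t * k * (W xs - F y))) := by
        rcases abs_cases (W xs - F y) with ⟨he, _⟩ | ⟨he, _⟩
        · have h3 : t * k * a ≤ t * k * (W xs - F y) :=
            mul_le_mul_of_nonneg_left (he ▸ h.le) (by positivity)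
          linarith [exp_le_exp.2 h3, exp_pos (-(t * k * (W xs - F y)))]
        · have h3 : t * k * a ≤ -(t * k * (W xs - F y)) := by
            calc t * k * a ≤ t * k * (-(W xs - F y)) :=
                mul_le_mul_of_nonneg_left (he ▸ h.le) (by positivity)
              _ = -(t * k * (W xs - F y)) := by ring
          linarith [exp_le_exp.2 h3, exp_pos (t * k * (W xs - F y))]
      calc (1 : ℝ) = exp (-(t * k * a)) * exp (t * k * a) := by
            rw [← exp_add]; simp
        _ ≤ _ := mul_le_mul_of_nonneg_left habs (exp_pos _).le
    · rw [if_neg h]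
      positivity
  -- rewrite each exponential as a product
  have hexprod : ∀ (u : ℝ) (xs : Fin k → X),
      (∏ i, w (xs i)) * exp (u * k * (W xs - F y)) =
        exp (-(u * k * F y)) * ∏ i, (w (xs i) * exp (u * g (xs i))) := by
    intro u xs
    have hne : (k : ℝ) ≠ 0 := hkpos.ne'
    have h1 : u * (k : ℝ) * (W xs - F y) = (∑ i, u * g (xs i)) + -(u * (k : ℝ) * F y) := by
      have hW : W xs = 1 / (k : ℝ) * ∑ i, g (xs i) := rfl
      rw [hW, ← Finset.mul_sum]
      field_simp
      ring
    rw [h1, exp_add, Real.exp_sum, Finset.prod_mul_distrib]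
    ring
  have hwprod : ∀ xs : Fin k → X, 0 ≤ ∏ i, w (xs i) :=
    fun xs => Finset.prod_nonneg (fun i _ => hw _)
  have hsum_nonneg : ∀ u : ℝ, 0 ≤ ∑ x, w x * exp (u * g x) :=
    fun u => Finset.sum_nonneg (fun x _ => mul_nonneg (hw x) (exp_pos _).le)
  show (∑ xs : Fin k → X, (∏ i, w (xs i)) * (if a < |W xs - F y| then (1 : ℝ) else 0))
      ≤ 2 * Real.exp (-((k : ℝ) * ε ^ 2) / (2 * stot ^ 2))
  calc ∑ xs : Fin k → X, (∏ i, w (xs i)) * (if a < |W xs - F y| then (1 : ℝ) else 0)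
      ≤ ∑ xs : Fin k → X, (∏ i, w (xs i)) *
          (exp (-(t * k * a)) * (exp (t * k * (W xs - F y)) + exp (-(t * k * (W xs - F y))))) :=
        Finset.sum_le_sum (fun xs _ => mul_le_mul_of_nonneg_left (indbd xs) (hwprod xs))
    _ = exp (-(t * k * a)) *
          ((exp (-(t * k * F y)) * ∑ xs : Fin k → X, ∏ i, (w (xs i) * exp (t * g (xs i)))) +
            (exp (t * k * F y) * ∑ xs : Fin k → X, ∏ i, (w (xs i) * exp (-t * g (xs i))))) := by
        rw [Finset.mul_sum, Finset.mul_sum, ← Finset.sum_add_distrib, Finset.mul_sum]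
        apply Finset.sum_congr rfl
        intro xs _
        have e1 := hexprod t xs
        have e2' := hexprod (-t) xs
        rw [show (-t * (k : ℝ) * (W xs - F y)) = -(t * (k : ℝ) * (W xs - F y)) from by ring,
          show -(-t * (k : ℝ) * F y) = t * (k : ℝ) * F y from by ring] at e2'
        linear_combination exp (-(t * (k : ℝ) * a)) * e1 + exp (-(t * (k : ℝ) * a)) * e2'
    _ ≤ exp (-(t * k * a)) *
          ((exp (-(t * k * F y)) * exp ((k : ℝ) * (t * F y + c))) +
            (exp (t * k * F y) * exp ((k : ℝ) * (-t * F y + c)))) := by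
        apply mul_le_mul_of_nonneg_left _ (exp_pos _).le
        apply add_le_add
        · apply mul_le_mul_of_nonneg_left _ (exp_pos _).le
          rw [prod_factor k (fun x => w x * exp (t * g x))]
          calc (∑ x, w x * exp (t * g x)) ^ k ≤ (exp (t * F y + c)) ^ k :=
              pow_le_pow_left₀ (hsum_nonneg t) mgfp k
            _ = exp ((k : ℝ) * (t * F y + c)) := by rw [← Real.exp_nat_mul]
        · apply mul_le_mul_of_nonneg_left _ (exp_pos _).le
          rw [prod_factor k (fun x => w x * exp (-t * g x))]
          calc (∑ x, w x * exp (-t * g x)) ^ k ≤ (exp (-t * F y + c)) ^ k :=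
              pow_le_pow_left₀ (hsum_nonneg (-t)) mgfm k
            _ = exp ((k : ℝ) * (-t * F y + c)) := by rw [← Real.exp_nat_mul]
    _ = 2 * Real.exp (-((k : ℝ) * ε ^ 2) / (2 * stot ^ 2)) := by
        rw [← exp_add, ← exp_add]
        rw [show -(t * (k : ℝ) * F y) + (k : ℝ) * (t * F y + c) = (k : ℝ) * c from by ring,
          show t * (k : ℝ) * F y + (k : ℝ) * (-t * F y + c) = (k : ℝ) * c from by ring]
        rw [show exp ((k : ℝ) * c) + exp ((k : ℝ) * c) = 2 * exp ((k : ℝ) * c) from (two_mul _).symm]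
        rw [← mul_assoc, mul_comm (exp (-(t * (k : ℝ) * a))) 2, mul_assoc, ← exp_add]
        congr 1
        have h2 : |F y| ≠ 0 := hqpos.ne'
        have h3 : stot ≠ 0 := hstotpos.ne'
        have hta : t * a = ε ^ 2 / stot ^ 2 := by
          rw [htdef, hadef]
          field_simp
        have htm : c = ε ^ 2 / stot ^ 2 / 2 := by
          rw [hcdef, htdef, hMdef]
          field_simp
        rw [show -(t * (k : ℝ) * a) + (k : ℝ) * c = -((k : ℝ) * (t * a)) + (k : ℝ) * c from by
          ring, hta, htm]
        field_simp
        ring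
end

section
/- Von Neumann's minimax identity for finite zero-sum games: for any finite sets X, Y and payoff f : X × Y → ℝ, max over probability distributions θ_Y on Y of min over x ∈ X of Σ_y θ_Y(y) f(x,y) equals min over probability distributions θ_X on X of max over y ∈ Y of Σ_x θ_X(x) f(x,y). -/
open Finset

/-- Expectation is at most the max. -/
lemma vN_exp_le_sup' {X : Type*} [Fintype X] [Nonempty X] {θ : X → ℝ}
    (hθ : θ ∈ stdSimplex ℝ X) (g : X → ℝ) :
    ∑ x, θ x * g x ≤ univ.sup' univ_nonempty g := by
  calc ∑ x, θ x * g x ≤ ∑ x, θ x * univ.sup' univ_nonempty g :=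
        Finset.sum_le_sum fun x _ =>
          mul_le_mul_of_nonneg_left (le_sup' g (mem_univ x)) (hθ.1 x)
    _ = univ.sup' univ_nonempty g := by rw [← Finset.sum_mul, hθ.2, one_mul]

/-- Min is at most the expectation. -/
lemma vN_inf'_le_exp {X : Type*} [Fintype X] [Nonempty X] {θ : X → ℝ}
    (hθ : θ ∈ stdSimplex ℝ X) (g : X → ℝ) :
    univ.inf' univ_nonempty g ≤ ∑ x, θ x * g x := by
  calc univ.inf' univ_nonempty g = ∑ x, θ x * univ.inf' univ_nonempty g := by
        rw [← Finset.sum_mul, hθ.2, one_mul]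
    _ ≤ ∑ x, θ x * g x :=
        Finset.sum_le_sum fun x _ =>
          mul_le_mul_of_nonneg_left (inf'_le g (mem_univ x)) (hθ.1 x)

/-- Von Neumann's minimax theorem for finite zero-sum games:
max over mixed strategies θ_Y of the min over x of the expected payoff equals
min over mixed strategies θ_X of the max over y of the expected payoff. -/
theorem vonNeumann_minimax
    {X Y : Type*} [Fintype X] [Fintype Y] [Nonempty X] [Nonempty Y]
    (f : X → Y → ℝ) :
    sSup {v : ℝ | ∃ θY ∈ stdSimplex ℝ Y,
        v = Finset.univ.inf' Finset.univ_nonempty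
              (fun x => ∑ y, θY y * f x y)} =
    sInf {v : ℝ | ∃ θX ∈ stdSimplex ℝ X,
        v = Finset.univ.sup' Finset.univ_nonempty
              (fun y => ∑ x, θX x * f x y)} := by
  classical
  set L : Set ℝ := {v : ℝ | ∃ θY ∈ stdSimplex ℝ Y,
        v = Finset.univ.inf' Finset.univ_nonempty
              (fun x => ∑ y, θY y * f x y)} with hL
  set R : Set ℝ := {v : ℝ | ∃ θX ∈ stdSimplex ℝ X,
        v = Finset.univ.sup' Finset.univ_nonempty
              (fun y => ∑ x, θX x * f x y)} with hR
  -- weak duality: every element of L is ≤ every element of R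
  have weak : ∀ l ∈ L, ∀ r ∈ R, l ≤ r := by
    rintro l ⟨θY, hθY, rfl⟩ r ⟨θX, hθX, rfl⟩
    calc univ.inf' univ_nonempty (fun x => ∑ y, θY y * f x y)
        ≤ ∑ x, θX x * ∑ y, θY y * f x y := vN_inf'_le_exp hθX _
      _ = ∑ y, θY y * ∑ x, θX x * f x y := by
          simp only [Finset.mul_sum]
          rw [Finset.sum_comm]
          apply Finset.sum_congr rfl; intro x _
          apply Finset.sum_congr rfl; intro y _
          ring
      _ ≤ univ.sup' univ_nonempty (fun y => ∑ x, θX x * f x y) :=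
          vN_exp_le_sup' hθY _
  have hLne : L.Nonempty := by
    inhabit Y
    exact ⟨_, Pi.single default 1, single_mem_stdSimplex ℝ default, rfl⟩
  have hRne : R.Nonempty := by
    inhabit X
    exact ⟨_, Pi.single default 1, single_mem_stdSimplex ℝ default, rfl⟩
  obtain ⟨l0, hl0⟩ := hLne
  obtain ⟨r0, hr0⟩ := hRne
  have hLbdd : BddAbove L := ⟨r0, fun l hl => weak l hl r0 hr0⟩
  have hRbdd : BddBelow R := ⟨l0, fun r hr => weak l0 hl0 r hr⟩
  have h1 : sSup L ≤ sInf R :=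
    csSup_le ⟨l0, hl0⟩ fun l hl => le_csInf ⟨r0, hr0⟩ fun r hr => weak l hl r hr
  refine le_antisymm h1 ?_
  -- strong duality
  set v : ℝ := sSup L with hv
  refine le_of_forall_pos_le_add ?_
  intro ε hε
  -- the linear map sending a mixed strategy on Y to its payoff vector
  set T : (Y → ℝ) →ₗ[ℝ] (X → ℝ) :=
    LinearMap.pi (fun x => ∑ y, f x y • LinearMap.proj y) with hT
  have hTapp : ∀ (θ : Y → ℝ) (x : X), T θ x = ∑ y, θ y * f x y := by
    intro θ x
    simp [hT, LinearMap.pi_apply, LinearMap.sum_apply, mul_comm]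
  set K : Set (X → ℝ) := T '' stdSimplex ℝ Y with hK
  have hKconv : Convex ℝ K := (convex_stdSimplex ℝ Y).linear_image T
  have hKcomp : IsCompact K :=
    (isCompact_stdSimplex ℝ Y).image (LinearMap.continuous_of_finiteDimensional T)
  set S : Set (X → ℝ) := {z | ∀ x, v + ε ≤ z x} with hS
  have hSconv : Convex ℝ S := by
    intro z hz w hw a b ha hb hab
    intro x
    have h1 := hz x; have h2 := hw x
    have : a • z x + b • w x ≥ a * (v+ε) + b * (v+ε) := by
      apply add_le_add
      · exact mul_le_mul_of_nonneg_left h1 ha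
      · exact mul_le_mul_of_nonneg_left h2 hb
    calc v + ε = a * (v+ε) + b * (v+ε) := by rw [← add_mul, hab, one_mul]
      _ ≤ a • z x + b • w x := this
      _ = (a • z + b • w) x := rfl
  have hSclosed : IsClosed S := by
    have : S = ⋂ x, {z : X → ℝ | v + ε ≤ z x} := by
      ext z; simp [hS, Set.mem_iInter]
    rw [this]
    exact isClosed_iInter fun x => isClosed_le continuous_const (continuous_apply x)
  have hdisj : Disjoint K S := by
    rw [Set.disjoint_left]
    rintro c ⟨θ, hθ, rfl⟩ hc
    have hmem : univ.inf' univ_nonempty (fun x => ∑ y, θ y * f x y) ∈ L := ⟨θ, hθ, rfl⟩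
    have hle : univ.inf' univ_nonempty (fun x => ∑ y, θ y * f x y) ≤ v :=
      le_csSup hLbdd hmem
    have hge : v + ε ≤ univ.inf' univ_nonempty (fun x => ∑ y, θ y * f x y) := by
      apply le_inf'
      intro x _
      rw [← hTapp θ x]
      exact hc x
    linarith
  obtain ⟨g, u, w, hgK, huw, hgS⟩ :=
    geometric_hahn_banach_compact_closed hKconv hKcomp hSconv hSclosed hdisj
  set a : X → ℝ := fun x => g (Pi.single x 1) with ha
  have hgapp : ∀ z : X → ℝ, g z = ∑ x, z x * a x := by
    intro z
    have := LinearMap.pi_apply_eq_sum_univ (g : (X → ℝ) →L[ℝ] ℝ).toLinearMap z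
    simp only [ContinuousLinearMap.coe_coe] at this
    rw [this]
    apply Finset.sum_congr rfl
    intro x _
    rw [smul_eq_mul, ha]
    congr 1
    congr 1
    ext j
    simp [Pi.single_apply, eq_comm]
  set cst : X → ℝ := fun _ => v + ε with hcst
  have hcstS : cst ∈ S := fun x => le_refl _
  have hgcst : g cst = (v + ε) * ∑ x, a x := by
    rw [hgapp, Finset.mul_sum]
  -- nonnegativity of coefficients
  have hanneg : ∀ x, 0 ≤ a x := by
    intro x
    by_contra hneg
    push_neg at hneg
    set t : ℝ := (w - g cst) / a x + 1 with ht
    set t' : ℝ := max t 0 with ht'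
    have ht'0 : 0 ≤ t' := le_max_right _ _
    have hmemS : cst + t' • (Pi.single x 1 : X → ℝ) ∈ S := by
      intro j
      have : (0:ℝ) ≤ t' * (Pi.single x 1 : X → ℝ) j := by
        apply mul_nonneg ht'0
        rcases eq_or_ne x j with h | h
        · subst h; simp
        · simp [Pi.single_apply, h]
      have : cst j ≤ cst j + t' * (Pi.single x 1 : X → ℝ) j := by linarith
      show v + ε ≤ cst j + t' * (Pi.single x 1 : X → ℝ) j
      linarith [show cst j = v + ε from rfl]
    have hval : g (cst + t' • (Pi.single x 1 : X → ℝ)) = g cst + t' * a x := by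
      rw [map_add, map_smul, smul_eq_mul, ha]
    have hta : t * a x = (w - g cst) + a x := by
      rw [ht, add_mul, div_mul_cancel₀ _ (ne_of_lt hneg), one_mul]
    have ht'le : t' * a x ≤ t * a x :=
      mul_le_mul_of_nonpos_right (le_max_left _ _) (le_of_lt hneg)
    have := hgS _ hmemS
    rw [hval] at this
    nlinarith
  have hsum : 0 < ∑ x, a x := by
    rcases lt_or_eq_of_le (Finset.sum_nonneg fun x _ => hanneg x) with h | h
    · exact h
    · exfalso
      have hall : ∀ x ∈ univ, a x = 0 :=
        (Finset.sum_eq_zero_iff_of_nonneg fun x _ => hanneg x).mp h.symm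
      have hg0 : ∀ z : X → ℝ, g z = 0 := by
        intro z; rw [hgapp]
        apply Finset.sum_eq_zero
        intro x hx; rw [hall x hx, mul_zero]
      have h1 := hgS cst hcstS
      inhabit Y
      have h2 := hgK _ ⟨Pi.single default 1, single_mem_stdSimplex ℝ default, rfl⟩
      rw [hg0] at h1 h2
      linarith
  set θX : X → ℝ := fun x => a x / ∑ x', a x' with hθX
  have hθXmem : θX ∈ stdSimplex ℝ X := by
    constructor
    · intro x; exact div_nonneg (hanneg x) (le_of_lt hsum)
    · rw [← Finset.sum_div, div_self (ne_of_gt hsum)]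
  have hcol : ∀ y, ∑ x, θX x * f x y < v + ε := by
    intro y
    have hmemK : T (Pi.single y 1) ∈ K := ⟨Pi.single y 1, single_mem_stdSimplex ℝ y, rfl⟩
    have h1 := hgK _ hmemK
    have h2 := hgS cst hcstS
    have hcolval : g (T (Pi.single y 1)) = ∑ x, f x y * a x := by
      rw [hgapp]
      apply Finset.sum_congr rfl
      intro x _
      rw [hTapp]
      simp [Pi.single_apply]
    have hlt : ∑ x, f x y * a x < (v + ε) * ∑ x, a x := by
      rw [← hcolval, ← hgcst]; linarith
    have : ∑ x, θX x * f x y = (∑ x, f x y * a x) / ∑ x', a x' := by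
      rw [Finset.sum_div]
      apply Finset.sum_congr rfl
      intro x _
      rw [hθX]
      ring
    rw [this, div_lt_iff₀ hsum]
    linarith
  have hmemR : univ.sup' univ_nonempty (fun y => ∑ x, θX x * f x y) ∈ R :=
    ⟨θX, hθXmem, rfl⟩
  have : univ.sup' univ_nonempty (fun y => ∑ x, θX x * f x y) ≤ v + ε := by
    apply sup'_le
    intro y _
    exact le_of_lt (hcol y)
  calc sInf R ≤ _ := csInf_le hRbdd hmemR
    _ ≤ v + ε := this
end

section
/- Multiplicative weights regret bound: with weights W_{t+1}(x) = W_t(x) e^{−η f(x,y_t)}, W_1 ≡ 1, payoffs f(x,y) ∈ [−1,1], and 0 < η ≤ 1, after T rounds it holds for every x ∈ X that Σ_{t=1}^T ⟨w_t, f(·,y_t)⟩ ≤ Σ_{t=1}^T f(x, y_t) + (ln|X|)/η + ηT/2, where w_t is the normalized weight distribution at round t. -/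
open Finset

/-- Monotonicity helper: if `g` has nonnegative derivative on `[0,1]`, then `g 0 ≤ g t`. -/
lemma mw_mono_aux (g g' : ℝ → ℝ) (h : ∀ t, HasDerivAt g (g' t) t)
    (h' : ∀ t ∈ Set.Icc (0:ℝ) 1, 0 ≤ g' t) :
    ∀ t ∈ Set.Icc (0:ℝ) 1, g 0 ≤ g t := by
  have hmono : MonotoneOn g (Set.Icc (0:ℝ) 1) := by
    apply monotoneOn_of_deriv_nonneg (convex_Icc 0 1)
    · exact fun x _ => (h x).continuousAt.continuousWithinAt
    · exact fun x _ => (h x).differentiableAt.differentiableWithinAt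
    · intro x hx
      rw [(h x).deriv]
      rw [interior_Icc] at hx
      exact h' x (Set.mem_Icc_of_Ioo hx)
  intro t ht
  exact hmono (Set.left_mem_Icc.2 zero_le_one) ht ht.1

lemma mw_A : ∀ t ∈ Set.Icc (0:ℝ) 1, t * Real.sinh t ≤ Real.cosh t := by
  intro t ht
  have h1 : Real.sinh t < Real.cosh t := Real.sinh_lt_cosh t
  have h2 : 0 ≤ Real.sinh t := Real.sinh_nonneg_iff.2 ht.1
  nlinarith [ht.1, ht.2]

lemma mw_B : ∀ t ∈ Set.Icc (0:ℝ) 1, (t/2) * Real.cosh t ≤ Real.sinh t := by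
  have key := mw_mono_aux (fun t => Real.sinh t - (t/2) * Real.cosh t)
    (fun t => (Real.cosh t - t * Real.sinh t) / 2)
    (fun t => by
      have h1 : HasDerivAt (fun t : ℝ => Real.sinh t - (t/2) * Real.cosh t)
          (Real.cosh t - ((1/2) * Real.cosh t + (t/2) * Real.sinh t)) t := by
        exact (Real.hasDerivAt_sinh t).sub
          (((hasDerivAt_id t).div_const 2).mul (Real.hasDerivAt_cosh t))
      convert h1 using 1; ring)
    (fun t ht => by
      have := mw_A t ht
      linarith)
  intro t ht
  have := key t ht
  simp at this
  linarith

lemma mw_C : ∀ t ∈ Set.Icc (0:ℝ) 1, (1 + t^2/4) * Real.sinh t ≤ t * Real.cosh t := by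
  have key := mw_mono_aux (fun t => t * Real.cosh t - (1 + t^2/4) * Real.sinh t)
    (fun t => (t/2) * (Real.sinh t - (t/2) * Real.cosh t))
    (fun t => by
      have h1 : HasDerivAt (fun t : ℝ => t * Real.cosh t - (1 + t^2/4) * Real.sinh t)
          ((1 * Real.cosh t + t * Real.sinh t) -
            ((0 + 2 * t^1 / 4) * Real.sinh t + (1 + t^2/4) * Real.cosh t)) t := by
        exact ((hasDerivAt_id t).mul (Real.hasDerivAt_cosh t)).sub
          ((((hasDerivAt_const t 1).add ((hasDerivAt_pow 2 t).div_const 4)).mul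
            (Real.hasDerivAt_sinh t)))
      convert h1 using 1; ring)
    (fun t ht => by
      have := mw_B t ht
      have ht0 := ht.1
      nlinarith)
  intro t ht
  have := key t ht
  simp at this
  linarith

lemma mw_D_pos (s t : ℝ) (hs : |s| ≤ 1) : 0 < Real.cosh t - s * Real.sinh t := by
  have h1 : Real.sinh t ^ 2 < Real.cosh t ^ 2 := by
    have := Real.cosh_sq_sub_sinh_sq t
    nlinarith
  have h2 : |Real.sinh t| < Real.cosh t := by
    have hc := Real.cosh_pos t
    rw [abs_lt]; constructor <;> nlinarith
  have h3 : s * Real.sinh t ≤ |Real.sinh t| := by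
    calc s * Real.sinh t ≤ |s * Real.sinh t| := le_abs_self _
    _ = |s| * |Real.sinh t| := abs_mul _ _
    _ ≤ 1 * |Real.sinh t| := by
        exact mul_le_mul_of_nonneg_right hs (abs_nonneg _)
    _ = |Real.sinh t| := one_mul _
  linarith

/-- Hoeffding-type scalar lemma. -/
lemma mw_hoeffding (η : ℝ) (hη0 : 0 ≤ η) (hη1 : η ≤ 1) (s : ℝ) (hs : |s| ≤ 1) :
    Real.cosh η - s * Real.sinh η ≤ Real.exp (η^2/2 - η * s) := by
  set u : ℝ → ℝ := fun t => t^2/2 - t*s - Real.log (Real.cosh t - s * Real.sinh t) with hu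
  have key := mw_mono_aux u
    (fun t => t - s - (Real.sinh t - s * Real.cosh t) / (Real.cosh t - s * Real.sinh t))
    (fun t => by
      have hD := mw_D_pos s t hs
      have h1 : HasDerivAt (fun t => Real.cosh t - s * Real.sinh t)
          (Real.sinh t - s * Real.cosh t) t :=
        (Real.hasDerivAt_cosh t).sub ((Real.hasDerivAt_sinh t).const_mul s)
      have h2 : HasDerivAt (fun t => Real.log (Real.cosh t - s * Real.sinh t))
          ((Real.sinh t - s * Real.cosh t) / (Real.cosh t - s * Real.sinh t)) t :=
        h1.log hD.ne'
      have h3 : HasDerivAt (fun t : ℝ => t^2/2 - t*s)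
          ((2 * t^1)/2 - 1 * s) t :=
        ((hasDerivAt_pow 2 t).div_const 2).sub ((hasDerivAt_id t).mul_const s)
      have h4 : HasDerivAt (fun t => t^2/2 - t*s - Real.log (Real.cosh t - s * Real.sinh t)) _ t :=
        h3.sub h2
      convert h4 using 1
      ring)
    (fun t ht => by
      have hD := mw_D_pos s t hs
      have hC := mw_C t ht
      have hsinh : 0 ≤ Real.sinh t := Real.sinh_nonneg_iff.2 ht.1
      rw [sub_nonneg, div_le_iff₀ hD]
      nlinarith [sq_nonneg (s - t/2), mul_nonneg (mul_nonneg (sq_nonneg (s - t/2)) hsinh) hsinh])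
  have hval := key η ⟨hη0, hη1⟩
  have h0 : u 0 = 0 := by simp [hu]
  rw [h0, hu] at hval
  simp only at hval
  have hD := mw_D_pos s η hs
  have : Real.log (Real.cosh η - s * Real.sinh η) ≤ η^2/2 - η * s := by linarith
  calc Real.cosh η - s * Real.sinh η
      = Real.exp (Real.log (Real.cosh η - s * Real.sinh η)) := (Real.exp_log hD).symm
    _ ≤ Real.exp (η^2/2 - η * s) := Real.exp_le_exp.2 this

/-- Chord bound from convexity of exp. -/
lemma mw_chord (η : ℝ) (z : ℝ) (hz : |z| ≤ 1) :
    Real.exp (-η * z) ≤ Real.cosh η - z * Real.sinh η := by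
  have ha : (0:ℝ) ≤ (1+z)/2 := by rw [abs_le] at hz; linarith
  have hb : (0:ℝ) ≤ (1-z)/2 := by rw [abs_le] at hz; linarith
  have hab : (1+z)/2 + (1-z)/2 = (1:ℝ) := by ring
  have h := convexOn_exp.2 (Set.mem_univ (-η)) (Set.mem_univ η) ha hb hab
  simp only [smul_eq_mul] at h
  have heq : (1+z)/2 * (-η) + (1-z)/2 * η = -η * z := by ring
  rw [heq] at h
  calc Real.exp (-η * z) ≤ (1+z)/2 * Real.exp (-η) + (1-z)/2 * Real.exp η := h
    _ = Real.cosh η - z * Real.sinh η := by rw [Real.cosh_eq, Real.sinh_eq]; ring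

/-- Multiplicative weights regret bound: after T rounds of the exponential
weights update, for every expert x the algorithm's cumulative expected loss
exceeds that of x by at most (ln|X|)/η + ηT/2. -/
theorem multiplicative_weights_regret
    {X Y : Type*} [Fintype X] [Nonempty X]
    (f : X → Y → ℝ) (hf : ∀ x y, |f x y| ≤ 1)
    (η : ℝ) (hη0 : 0 < η) (hη1 : η ≤ 1)
    (y : ℕ → Y) (T : ℕ)
    (W : ℕ → X → ℝ)
    (hW1 : ∀ x, W 1 x = 1)
    (hrec : ∀ t x, W (t + 1) x = W t x * Real.exp (-η * f x (y t)))
    (w : ℕ → X → ℝ)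
    (hw : ∀ t x, w t x = W t x / ∑ x', W t x') :
    ∀ x : X,
      (∑ t ∈ Finset.Icc 1 T, ∑ x', w t x' * f x' (y t))
        ≤ (∑ t ∈ Finset.Icc 1 T, f x (y t))
          + Real.log (Fintype.card X) / η + η * T / 2 := by
  intro x
  set Φ : ℕ → ℝ := fun t => ∑ x', W t x' with hΦ
  set s : ℕ → ℝ := fun t => ∑ x', w t x' * f x' (y t) with hsdef
  have hWpos : ∀ t, 1 ≤ t → ∀ x', 0 < W t x' := by
    intro t
    induction t with
    | zero => omega
    | succ n ih =>
      intro _ x'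
      rcases Nat.eq_zero_or_pos n with h | h
      · subst h; rw [hW1]; norm_num
      · rw [hrec]
        exact mul_pos (ih h x') (Real.exp_pos _)
  have hΦpos : ∀ t, 1 ≤ t → 0 < Φ t := fun t ht =>
    Finset.sum_pos (fun x' _ => hWpos t ht x') Finset.univ_nonempty
  have hwsum : ∀ t, 1 ≤ t → ∑ x', w t x' = 1 := by
    intro t ht
    simp only [hw]
    rw [← Finset.sum_div, div_self (hΦpos t ht).ne']
  have hwpos : ∀ t, 1 ≤ t → ∀ x', 0 ≤ w t x' := by
    intro t ht x'
    rw [hw]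
    exact div_nonneg (hWpos t ht x').le (hΦpos t ht).le
  have hs_abs : ∀ t, 1 ≤ t → |s t| ≤ 1 := by
    intro t ht
    calc |s t| ≤ ∑ x', |w t x' * f x' (y t)| := Finset.abs_sum_le_sum_abs _ _
      _ ≤ ∑ x', w t x' := by
          apply Finset.sum_le_sum
          intro x' _
          rw [abs_mul, abs_of_nonneg (hwpos t ht x')]
          exact mul_le_of_le_one_right (hwpos t ht x') (hf x' (y t))
      _ = 1 := hwsum t ht
  have hstep : ∀ t, 1 ≤ t → Φ (t+1) ≤ Φ t * Real.exp (η^2/2 - η * s t) := by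
    intro t ht
    have hne : (∑ x', W t x') ≠ 0 := (hΦpos t ht).ne'
    have hWf : ∑ x', W t x' * f x' (y t) = Φ t * s t := by
      simp only [hsdef, hw, hΦ, Finset.mul_sum]
      apply Finset.sum_congr rfl
      intro x' _
      field_simp
    have h1 : Φ (t+1) = ∑ x', W t x' * Real.exp (-η * f x' (y t)) :=
      Finset.sum_congr rfl fun x' _ => hrec t x'
    have h2 : ∑ x', W t x' * Real.exp (-η * f x' (y t))
        ≤ ∑ x', W t x' * (Real.cosh η - f x' (y t) * Real.sinh η) := by
      apply Finset.sum_le_sum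
      intro x' _
      exact mul_le_mul_of_nonneg_left (mw_chord η (f x' (y t)) (hf x' (y t)))
        (hWpos t ht x').le
    have h3 : ∑ x', W t x' * (Real.cosh η - f x' (y t) * Real.sinh η)
        = Φ t * (Real.cosh η - s t * Real.sinh η) := by
      have : ∀ x', W t x' * (Real.cosh η - f x' (y t) * Real.sinh η)
          = W t x' * Real.cosh η - (W t x' * f x' (y t)) * Real.sinh η := by
        intro x'; ring
      simp only [this]
      rw [Finset.sum_sub_distrib, ← Finset.sum_mul, ← Finset.sum_mul, hWf]
      ring
    have h4 : Real.cosh η - s t * Real.sinh η ≤ Real.exp (η^2/2 - η * s t) :=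
      mw_hoeffding η hη0.le hη1 (s t) (hs_abs t ht)
    calc Φ (t+1) = ∑ x', W t x' * Real.exp (-η * f x' (y t)) := h1
      _ ≤ Φ t * (Real.cosh η - s t * Real.sinh η) := by rw [← h3]; exact h2
      _ ≤ Φ t * Real.exp (η^2/2 - η * s t) :=
          mul_le_mul_of_nonneg_left h4 (hΦpos t ht).le
  have htel : ∀ n : ℕ, Φ (n+1) ≤ Φ 1 * Real.exp (∑ t ∈ Finset.Icc 1 n, (η^2/2 - η * s t)) := by
    intro m
    induction m with
    | zero => simp
    | succ n ih =>
      calc Φ (n+1+1) ≤ Φ (n+1) * Real.exp (η^2/2 - η * s (n+1)) := hstep (n+1) (by omega)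
        _ ≤ (Φ 1 * Real.exp (∑ t ∈ Finset.Icc 1 n, (η^2/2 - η * s t)))
              * Real.exp (η^2/2 - η * s (n+1)) :=
            mul_le_mul_of_nonneg_right ih (Real.exp_pos _).le
        _ = Φ 1 * Real.exp (∑ t ∈ Finset.Icc 1 (n+1), (η^2/2 - η * s t)) := by
            rw [Finset.sum_Icc_succ_top (by omega), Real.exp_add]
            ring
  have hclosed : ∀ n : ℕ, W (n+1) x = Real.exp (-η * ∑ t ∈ Finset.Icc 1 n, f x (y t)) := by
    intro m
    induction m with
    | zero => simp [hW1]
    | succ n ih =>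
      rw [hrec, ih, ← Real.exp_add, Finset.sum_Icc_succ_top (by omega)]
      ring_nf
  have hlow : W (T+1) x ≤ Φ (T+1) :=
    Finset.single_le_sum (fun x' _ => (hWpos (T+1) (by omega) x').le) (Finset.mem_univ x)
  have hΦ1 : Φ 1 = (Fintype.card X : ℝ) := by
    simp [hΦ, hW1, Finset.card_univ]
  have hcard : (0:ℝ) < (Fintype.card X : ℝ) := by
    exact_mod_cast Fintype.card_pos
  have hlog : -η * ∑ t ∈ Finset.Icc 1 T, f x (y t)
      ≤ Real.log (Fintype.card X) + ∑ t ∈ Finset.Icc 1 T, (η^2/2 - η * s t) := by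
    have h5 : Real.exp (-η * ∑ t ∈ Finset.Icc 1 T, f x (y t))
        ≤ Real.exp (Real.log (Fintype.card X) + ∑ t ∈ Finset.Icc 1 T, (η^2/2 - η * s t)) := by
      rw [Real.exp_add, Real.exp_log hcard]
      rw [← hclosed T]
      calc W (T+1) x ≤ Φ (T+1) := hlow
        _ ≤ Φ 1 * Real.exp (∑ t ∈ Finset.Icc 1 T, (η^2/2 - η * s t)) := htel T
        _ = (Fintype.card X : ℝ) * Real.exp (∑ t ∈ Finset.Icc 1 T, (η^2/2 - η * s t)) := by
            rw [hΦ1]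
    exact Real.exp_le_exp.1 h5
  have hsplit : ∑ t ∈ Finset.Icc 1 T, (η^2/2 - η * s t)
      = (T : ℝ) * (η^2/2) - η * ∑ t ∈ Finset.Icc 1 T, s t := by
    rw [Finset.sum_sub_distrib, Finset.sum_const, Nat.card_Icc, ← Finset.mul_sum]
    simp
  rw [hsplit] at hlog
  set A := ∑ t ∈ Finset.Icc 1 T, s t with hA
  set B := ∑ t ∈ Finset.Icc 1 T, f x (y t) with hB
  have key : η * A ≤ η * (B + Real.log (Fintype.card X) / η + η * T / 2) := by
    rw [mul_add, mul_add, mul_div_cancel₀ _ hη0.ne']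
    nlinarith [hlog]
  exact le_of_mul_le_mul_left key hη0
end
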